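/- Let G₂₂ = D⁻¹N = ÑD̃⁻¹ with a double coprime factorization over a commutative integral domain A (so [[D,-N],[-Ỹ,X̃]][[X,Ñ],[Y,D̃]] = I with all blocks over A and det D, det D̃, det X, det X̃ ≠ 0). Then for any Λ over A with det(X + ÑΛ) ≠ 0 and det(X̃ + ΛN) ≠ 0, one has the equality of controllers (Y + D̃Λ)(X + ÑΛ)⁻¹ = (X̃ + ΛN)⁻¹(Ỹ + ΛD). -/
import Mathlib


open Matrix

/-- A matrix over the fraction field of `R` is *stable* if all its entries lie in
the image of `R`. -/
def stableMat (R : Type*) [CommRing R] {a b : Type*}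
    (M : Matrix a b (FractionRing R)) : Prop :=
  ∀ i j, M i j ∈ Set.range (algebraMap R (FractionRing R))

/-- Consistency of the two Youla–Kučera parametrization formulas:
`(Y + D̃Λ)(X + ÑΛ)⁻¹ = (X̃ + ΛN)⁻¹(Ỹ + ΛD)`. -/
theorem youla_kucera_consistency {R : Type*} [CommRing R] [IsDomain R]
    {nY nU : Type*} [Fintype nY] [Fintype nU] [DecidableEq nY] [DecidableEq nU]
    (G₂₂ : Matrix nY nU (FractionRing R))
    (D Xm : Matrix nY nY (FractionRing R))
    (N Nt : Matrix nY nU (FractionRing R))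
    (Dt Xt : Matrix nU nU (FractionRing R))
    (Y Yt : Matrix nU nY (FractionRing R))
    (hD : stableMat R D) (hN : stableMat R N) (hX : stableMat R Xm)
    (hY : stableMat R Y) (hDt : stableMat R Dt) (hNt : stableMat R Nt)
    (hXt : stableMat R Xt) (hYt : stableMat R Yt)
    (hdD : D.det ≠ 0) (hdDt : Dt.det ≠ 0) (hdX : Xm.det ≠ 0) (hdXt : Xt.det ≠ 0)
    (hfac1 : G₂₂ = D⁻¹ * N) (hfac2 : G₂₂ = Nt * Dt⁻¹)
    (hBezout : Matrix.fromBlocks D (-N) (-Yt) Xt *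
        Matrix.fromBlocks Xm Nt Y Dt = 1)
    (Λ : Matrix nU nY (FractionRing R)) (hΛ : stableMat R Λ)
    (hd1 : (Xm + Nt * Λ).det ≠ 0) (hd2 : (Xt + Λ * N).det ≠ 0) :
    (Y + Dt * Λ) * (Xm + Nt * Λ)⁻¹ = (Xt + Λ * N)⁻¹ * (Yt + Λ * D) := by
  rw [Matrix.fromBlocks_multiply, ← Matrix.fromBlocks_one, Matrix.fromBlocks_inj] at hBezout
  obtain ⟨e11, e12, e21, e22⟩ := hBezout
  have hXY : Xt * Y = Yt * Xm := by
    rw [Matrix.neg_mul, neg_add_eq_sub, sub_eq_zero] at e21; exact e21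
  have hXD : Xt * Dt = 1 + Yt * Nt := by
    rw [Matrix.neg_mul, neg_add_eq_sub, sub_eq_iff_eq_add] at e22; exact e22
  have hND : N * Dt = D * Nt := by
    rw [Matrix.neg_mul, ← sub_eq_add_neg, sub_eq_zero] at e12; exact e12.symm
  have hNY : N * Y = D * Xm - 1 := by
    rw [Matrix.neg_mul, ← sub_eq_add_neg, sub_eq_iff_eq_add] at e11
    rw [e11]; abel
  have key : (Xt + Λ * N) * (Y + Dt * Λ) = (Yt + Λ * D) * (Xm + Nt * Λ) := by
    have h1 : (Xt + Λ * N) * (Y + Dt * Λ)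
        = Xt * Y + Λ * (N * Y) + (Xt * Dt) * Λ + Λ * (N * Dt) * Λ := by
      simp only [Matrix.add_mul, Matrix.mul_add, Matrix.mul_assoc]
      abel
    have h2 : (Yt + Λ * D) * (Xm + Nt * Λ)
        = Yt * Xm + Λ * (D * Xm) + (Yt * Nt) * Λ + Λ * (D * Nt) * Λ := by
      simp only [Matrix.add_mul, Matrix.mul_add, Matrix.mul_assoc]
      abel
    rw [h1, h2, hXY, hXD, hNY, hND]
    simp only [Matrix.mul_sub, Matrix.sub_mul, Matrix.add_mul, Matrix.mul_one,
      Matrix.one_mul]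
    abel
  have hA := Matrix.nonsing_inv_mul _ (isUnit_iff_ne_zero.mpr hd2)
  have hB := Matrix.mul_nonsing_inv _ (isUnit_iff_ne_zero.mpr hd1)
  calc (Y + Dt * Λ) * (Xm + Nt * Λ)⁻¹
      = (Xt + Λ * N)⁻¹ * ((Xt + Λ * N) * (Y + Dt * Λ)) * (Xm + Nt * Λ)⁻¹ := by
        rw [← Matrix.mul_assoc, hA, Matrix.one_mul]
    _ = (Xt + Λ * N)⁻¹ * ((Yt + Λ * D) * ((Xm + Nt * Λ) * (Xm + Nt * Λ)⁻¹)) := by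
        rw [key, Matrix.mul_assoc, Matrix.mul_assoc]
    _ = (Xt + Λ * N)⁻¹ * (Yt + Λ * D) := by rw [hB, Matrix.mul_one]
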